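/- arXiv:1607.08863 — 4 statements merged into one kernel-verified Lean document; each statement's English description precedes it below -/
import Mathlib

section
/- Let x* = (s*_1,…,s*_N) be a strict Nash equilibrium of a finite N-player game, let a > 0 and M > 0 be such that v_{i s*_i}(x) − v_{i s_i}(x) ≥ a for all x ∈ U_M, all s_i ≠ s*_i and all i. Suppose the HEDGE algorithm with perfect mixed payoff observations (v̂_i(t) = v_i(x(t))) and step-sizes γ_t > 0 is initialized at a point x(1) ∈ U_M. Then for all t ≥ 1, ‖x(t+1) − x*‖ ≤ C·e^{−a·Σ_{j=1}^t γ_j}, where C = 2 e^{−M} Σ_i (|S_i| − 1). In particular, if Σ_{t=1}^∞ γ_t = ∞, then x(t) converges to x*. -/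
open Real Finset Filter Topology

noncomputable section

/-- Payoff to player `i` of pure strategy `b` against the mixed profile `x` of the
other players. -/
def purePay {N : ℕ} (S : Fin N → Type*) [∀ i, Fintype (S i)] [∀ i, DecidableEq (S i)]
    (u : ∀ _ : Fin N, (∀ j, S j) → ℝ) (i : Fin N) (b : S i) (x : ∀ j, S j → ℝ) : ℝ :=
  ∑ s : ∀ j, S j, if s i = b then u i s * ∏ j ∈ univ.erase i, x j (s j) else 0

/-- The logit (exponential weights) map. -/
def logit {α : Type*} [Fintype α] (y : α → ℝ) : α → ℝ :=
  fun a => Real.exp (y a) / ∑ b, Real.exp (y b)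

/-- `U_M = { x = Λ(y) : y_{i s_i} − y_{i s*_i} ≤ −M for all s_i ≠ s*_i, all i }`. -/
def inUM {N : ℕ} (S : Fin N → Type*) [∀ i, Fintype (S i)]
    (sstar : ∀ i, S i) (M : ℝ) (x : ∀ i, S i → ℝ) : Prop :=
  ∃ y : ∀ i, S i → ℝ, (∀ i, x i = logit (y i)) ∧
    ∀ i, ∀ b : S i, b ≠ sstar i → y i b - y i (sstar i) ≤ -M

lemma logit_pos {α : Type*} [Fintype α] [Nonempty α] (y : α → ℝ) (b : α) : 0 < logit y b :=
  div_pos (Real.exp_pos _) (Finset.sum_pos (fun c _ => Real.exp_pos _) Finset.univ_nonempty)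

lemma sum_logit {α : Type*} [Fintype α] [Nonempty α] (y : α → ℝ) : ∑ b, logit y b = 1 := by
  unfold logit
  rw [← Finset.sum_div, div_self
    (ne_of_gt (Finset.sum_pos (fun c _ => Real.exp_pos _) Finset.univ_nonempty))]

lemma logit_le_exp_sub {α : Type*} [Fintype α] (y : α → ℝ) (b s : α) :
    logit y b ≤ Real.exp (y b - y s) := by
  unfold logit
  rw [Real.exp_sub, div_le_div_iff₀
    (Finset.sum_pos (fun c _ => Real.exp_pos _) ⟨s, Finset.mem_univ s⟩) (Real.exp_pos _)]
  have h : Real.exp (y s) ≤ ∑ c, Real.exp (y c) :=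
    Finset.single_le_sum (fun c _ => (Real.exp_pos _).le) (Finset.mem_univ s)
  nlinarith [Real.exp_pos (y b)]

lemma logit_eq_diff {α : Type*} [Fintype α] {y y' : α → ℝ} (h : logit y = logit y')
    (b s : α) : y b - y s = y' b - y' s := by
  have hSig : 0 < ∑ c, Real.exp (y c) :=
    Finset.sum_pos (fun c _ => Real.exp_pos _) ⟨s, Finset.mem_univ s⟩
  have hSig' : 0 < ∑ c, Real.exp (y' c) :=
    Finset.sum_pos (fun c _ => Real.exp_pos _) ⟨s, Finset.mem_univ s⟩
  have hb := congrFun h b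
  have hs := congrFun h s
  unfold logit at hb hs
  rw [div_eq_div_iff hSig.ne' hSig'.ne'] at hb hs
  have h1 : Real.exp (y b) * Real.exp (y' s) * (∑ c, Real.exp (y' c))
      = Real.exp (y' b) * Real.exp (y s) * (∑ c, Real.exp (y' c)) := by
    linear_combination Real.exp (y' s) * hb - Real.exp (y' b) * hs
  have h2 := mul_right_cancel₀ hSig'.ne' h1
  rw [← Real.exp_add, ← Real.exp_add] at h2
  have h3 := Real.exp_injective h2
  linarith

lemma l1_bound {α : Type*} [Fintype α] [DecidableEq α] (y : α → ℝ) (s : α) (c : ℝ)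
    (h : ∀ b, b ≠ s → y b - y s ≤ -c) :
    ∑ b, |logit y b - if b = s then 1 else 0| ≤
      2 * ((Fintype.card α : ℝ) - 1) * Real.exp (-c) := by
  haveI : Nonempty α := ⟨s⟩
  have hsum : ∑ b, logit y b = 1 := sum_logit y
  have hpos : ∀ b, 0 < logit y b := logit_pos y
  have hadd := Finset.sum_erase_add Finset.univ (logit y) (Finset.mem_univ s)
  have herase : ∑ b ∈ Finset.univ.erase s, logit y b = 1 - logit y s := by linarith
  have hle1 : logit y s ≤ 1 := by
    have := Finset.sum_nonneg (fun b (_ : b ∈ Finset.univ.erase s) => (hpos b).le)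
    linarith
  have hsplit : ∑ b, |logit y b - if b = s then 1 else 0|
      = (∑ b ∈ Finset.univ.erase s, logit y b) + |logit y s - 1| := by
    rw [← Finset.sum_erase_add _ _ (Finset.mem_univ s), if_pos rfl]
    congr 1
    refine Finset.sum_congr rfl fun b hb => ?_
    rw [if_neg (Finset.ne_of_mem_erase hb), sub_zero, abs_of_pos (hpos b)]
  have habs : |logit y s - 1| = ∑ b ∈ Finset.univ.erase s, logit y b := by
    rw [abs_of_nonpos (by linarith), herase]; ring
  rw [hsplit, habs]
  have hbound : ∑ b ∈ Finset.univ.erase s, logit y b ≤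
      ((Fintype.card α : ℝ) - 1) * Real.exp (-c) := by
    calc ∑ b ∈ Finset.univ.erase s, logit y b
        ≤ ∑ _b ∈ Finset.univ.erase s, Real.exp (-c) := by
          refine Finset.sum_le_sum fun b hb => ?_
          calc logit y b ≤ Real.exp (y b - y s) := logit_le_exp_sub y b s
          _ ≤ Real.exp (-c) := Real.exp_le_exp.mpr (h b (Finset.ne_of_mem_erase hb))
      _ = ((Fintype.card α : ℝ) - 1) * Real.exp (-c) := by
          rw [Finset.sum_const, nsmul_eq_mul,
            Finset.card_erase_of_mem (Finset.mem_univ s), Finset.card_univ,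
            Nat.cast_sub Fintype.card_pos, Nat.cast_one]
  linarith

/-- Deterministic HEDGE started in `U_M` near a strict equilibrium converges to it at the
rate `‖x(t+1) − x*‖ ≤ C e^{−a Σ_{j=1}^t γ_j}` with `C = 2 e^{−M} Σ_i (|S_i| − 1)`;
in particular, if `Σ_t γ_t = ∞`, then `x(t) → x*`. -/
theorem hedge_perfect_info_exponential_convergence
    {N : ℕ} (S : Fin N → Type*) [∀ i, Fintype (S i)] [∀ i, DecidableEq (S i)]
    (u : ∀ _ : Fin N, (∀ j, S j) → ℝ)
    (sstar : ∀ i, S i)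
    (hstrict : ∀ i, ∀ b : S i, b ≠ sstar i →
      u i (Function.update sstar i b) < u i sstar)
    (a M : ℝ) (ha : 0 < a) (hM : 0 < M)
    (hgap : ∀ x : ∀ i, S i → ℝ, inUM S sstar M x →
      ∀ i, ∀ b : S i, b ≠ sstar i →
        purePay S u i (sstar i) x - purePay S u i b x ≥ a)
    (γ : ℕ → ℝ) (hγ : ∀ t, 1 ≤ t → 0 < γ t)
    (y : ℕ → ∀ i, S i → ℝ) (x : ℕ → ∀ i, S i → ℝ)
    (hx : ∀ t, 1 ≤ t → ∀ i, x t i = logit (y t i))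
    (hrec : ∀ t, 1 ≤ t → ∀ i, ∀ b : S i,
      y (t + 1) i b = y t i b + γ t * purePay S u i b (x t))
    (hinit : inUM S sstar M (x 1)) :
    (∀ t, 1 ≤ t →
      ∑ i, ∑ b, |x (t + 1) i b - (if b = sstar i then 1 else 0)| ≤
        (2 * Real.exp (-M) * ∑ i, ((Fintype.card (S i) : ℝ) - 1)) *
          Real.exp (-a * ∑ j ∈ Finset.Icc 1 t, γ j)) ∧
    (Tendsto (fun T => ∑ j ∈ Finset.Icc 1 T, γ j) atTop atTop →
      Tendsto x atTop (𝓝 (fun i b => if b = sstar i then (1 : ℝ) else 0))) := by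
  classical
  set G : ℕ → ℝ := fun t => ∑ j ∈ Finset.Ico 1 t, γ j with hGdef
  have hGnonneg : ∀ t, 0 ≤ G t := fun t =>
    Finset.sum_nonneg fun j hj => (hγ j (Finset.mem_Ico.mp hj).1).le
  -- key inductive bound on score differences
  have key : ∀ t, 1 ≤ t → ∀ i, ∀ b : S i, b ≠ sstar i →
      y t i b - y t i (sstar i) ≤ -M - a * G t := by
    intro t ht
    induction t, ht using Nat.le_induction with
    | base =>
      obtain ⟨y', hy', hle⟩ := hinit
      intro i b hb
      have hlog : logit (y 1 i) = logit (y' i) := by rw [← hx 1 le_rfl i, hy' i]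
      have hd := logit_eq_diff hlog b (sstar i)
      have : G 1 = 0 := by simp [hGdef]
      rw [this]
      have := hle i b hb
      linarith
    | succ t ht ih =>
      have hUM : inUM S sstar M (x t) := by
        refine ⟨y t, hx t ht, fun i b hb => ?_⟩
        have h1 := ih i b hb
        have h2 := hGnonneg t
        nlinarith
      intro i b hb
      have hg := hgap (x t) hUM i b hb
      have hz := ih i b hb
      have hGt : G (t + 1) = G t + γ t := Finset.sum_Ico_succ_top ht γ
      rw [hrec t ht i b, hrec t ht i (sstar i), hGt]
      have hγt := hγ t ht
      nlinarith
  -- the quantitative bound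
  have bound : ∀ t, 1 ≤ t →
      ∑ i, ∑ b, |x (t + 1) i b - (if b = sstar i then 1 else 0)| ≤
        (2 * Real.exp (-M) * ∑ i, ((Fintype.card (S i) : ℝ) - 1)) *
          Real.exp (-a * ∑ j ∈ Finset.Icc 1 t, γ j) := by
    intro t ht
    have hIcc : ∑ j ∈ Finset.Icc 1 t, γ j = G (t + 1) := by
      show ∑ j ∈ Finset.Icc 1 t, γ j = ∑ j ∈ Finset.Ico 1 (t + 1), γ j
      rw [Finset.Ico_add_one_right_eq_Icc]
    have hexp : Real.exp (-(M + a * G (t + 1)))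
        = Real.exp (-M) * Real.exp (-a * G (t + 1)) := by
      rw [← Real.exp_add]; ring_nf
    have hterm : ∀ i, ∑ b, |x (t + 1) i b - (if b = sstar i then 1 else 0)| ≤
        2 * ((Fintype.card (S i) : ℝ) - 1) * Real.exp (-(M + a * G (t + 1))) := by
      intro i
      rw [hx (t + 1) (by omega) i]
      exact l1_bound (y (t + 1) i) (sstar i) (M + a * G (t + 1))
        (fun b hb => by have := key (t + 1) (by omega) i b hb; linarith)
    calc ∑ i, ∑ b, |x (t + 1) i b - (if b = sstar i then 1 else 0)|
        ≤ ∑ i, 2 * ((Fintype.card (S i) : ℝ) - 1) * Real.exp (-(M + a * G (t + 1))) :=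
          Finset.sum_le_sum fun i _ => hterm i
      _ = (2 * Real.exp (-M) * ∑ i, ((Fintype.card (S i) : ℝ) - 1)) *
          Real.exp (-a * ∑ j ∈ Finset.Icc 1 t, γ j) := by
          rw [hIcc]
          simp only [Finset.mul_sum, Finset.sum_mul]
          refine Finset.sum_congr rfl fun i _ => ?_
          rw [hexp]; ring
  refine ⟨bound, ?_⟩
  intro hdiv
  set C := 2 * Real.exp (-M) * ∑ i, ((Fintype.card (S i) : ℝ) - 1) with hC
  have hlim : Tendsto (fun t => C * Real.exp (-a * ∑ j ∈ Finset.Icc 1 t, γ j)) atTop (𝓝 0) := by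
    have h1 : Tendsto (fun t => a * ∑ j ∈ Finset.Icc 1 t, γ j) atTop atTop :=
      hdiv.const_mul_atTop ha
    have h2 : Tendsto (fun t => -a * ∑ j ∈ Finset.Icc 1 t, γ j) atTop atBot := by
      have h := tendsto_neg_atTop_atBot.comp h1
      have he : (fun t => -a * ∑ j ∈ Finset.Icc 1 t, γ j)
          = (Neg.neg ∘ fun t => a * ∑ j ∈ Finset.Icc 1 t, γ j) := by
        funext t; simp [Function.comp, neg_mul]
      rw [he]; exact h
    have h3 : Tendsto (fun t => Real.exp (-a * ∑ j ∈ Finset.Icc 1 t, γ j)) atTop (𝓝 0) :=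
      Real.tendsto_exp_atBot.comp h2
    simpa using h3.const_mul C
  rw [tendsto_pi_nhds]
  intro i
  rw [tendsto_pi_nhds]
  intro b
  have habs : Tendsto (fun t => |x (t + 1) i b - (if b = sstar i then (1:ℝ) else 0)|)
      atTop (𝓝 0) := by
    apply squeeze_zero' (Filter.Eventually.of_forall fun t => abs_nonneg _) ?_ hlim
    filter_upwards [Filter.eventually_ge_atTop 1] with t ht
    calc |x (t + 1) i b - (if b = sstar i then (1:ℝ) else 0)|
        ≤ ∑ b', |x (t + 1) i b' - (if b' = sstar i then (1:ℝ) else 0)| :=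
          Finset.single_le_sum
            (f := fun b' => |x (t + 1) i b' - (if b' = sstar i then (1:ℝ) else 0)|)
            (fun _ _ => abs_nonneg _) (Finset.mem_univ b)
      _ ≤ ∑ i', ∑ b', |x (t + 1) i' b' - (if b' = sstar i' then (1:ℝ) else 0)| :=
          Finset.single_le_sum
            (f := fun i' => ∑ b', |x (t + 1) i' b' - (if b' = sstar i' then (1:ℝ) else 0)|)
            (fun _ _ => Finset.sum_nonneg fun _ _ => abs_nonneg _) (Finset.mem_univ i)
      _ ≤ C * Real.exp (-a * ∑ j ∈ Finset.Icc 1 t, γ j) := bound t ht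
  have h2 : Tendsto (fun t => x (t + 1) i b) atTop
      (𝓝 (if b = sstar i then (1:ℝ) else 0)) := by
    rw [tendsto_iff_norm_sub_tendsto_zero]
    simpa [Real.norm_eq_abs] using habs
  exact (tendsto_add_atTop_iff_nat 1).mp h2
end
end

section
/- Let x* = (s*_i)_i be a pure profile of a finite N-player game and suppose a > 0 and M > 0 are such that v_{i s*_i}(x) − v_{i s_i}(x) ≥ a for all x ∈ U_M, all s_i ≠ s*_i and all i. Then the set U_M is forward-invariant under one step of the HEDGE algorithm with perfect mixed payoff observations and any step-size γ_t > 0: if x(t) = Λ(y(t)) ∈ U_M and y(t+1) = y(t) + γ_t v(x(t)), then for every i and every s_i ≠ s*_i the score differences z_{i s_i} = y_{i s_i} − y_{i s*_i} satisfy z_{i s_i}(t+1) ≤ z_{i s_i}(t) − a γ_t ≤ −M − a γ_t; in particular x(t+1) = Λ(y(t+1)) ∈ U_M. -/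
open Real Finset Filter Topology

noncomputable section

/-- One step of HEDGE with perfect mixed payoff observations leaves `U_M` invariant:
if `x = Λ(y) ∈ U_M` and `y' = y + γ v(x)`, then the score differences
`z_{i s_i} = y_{i s_i} − y_{i s*_i}` satisfy
`z'_{i s_i} ≤ z_{i s_i} − aγ ≤ −M − aγ`, so `Λ(y') ∈ U_M`. -/
theorem hedge_one_step_invariance
    {N : ℕ} (S : Fin N → Type*) [∀ i, Fintype (S i)] [∀ i, DecidableEq (S i)]
    (u : ∀ _ : Fin N, (∀ j, S j) → ℝ)
    (sstar : ∀ i, S i)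
    (a M γ : ℝ) (ha : 0 < a) (hM : 0 < M) (hγ : 0 < γ)
    (hgap : ∀ x : ∀ i, S i → ℝ, inUM S sstar M x →
      ∀ i, ∀ b : S i, b ≠ sstar i →
        purePay S u i (sstar i) x - purePay S u i b x ≥ a)
    (y x y' : ∀ i, S i → ℝ)
    (hxy : ∀ i, x i = logit (y i))
    (hz : ∀ i, ∀ b : S i, b ≠ sstar i → y i b - y i (sstar i) ≤ -M)
    (hy' : ∀ i, ∀ b : S i, y' i b = y i b + γ * purePay S u i b x) :
    (∀ i, ∀ b : S i, b ≠ sstar i →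
      y' i b - y' i (sstar i) ≤ (y i b - y i (sstar i)) - a * γ ∧
      y' i b - y' i (sstar i) ≤ -M - a * γ) ∧
    inUM S sstar M (fun i => logit (y' i)) := by
  have hxU : inUM S sstar M x := ⟨y, hxy, hz⟩
  have key : ∀ i, ∀ b : S i, b ≠ sstar i →
      y' i b - y' i (sstar i) ≤ (y i b - y i (sstar i)) - a * γ ∧
      y' i b - y' i (sstar i) ≤ -M - a * γ := by
    intro i b hb
    have hg := hgap x hxU i b hb
    have h1 : y' i b - y' i (sstar i) ≤ (y i b - y i (sstar i)) - a * γ := by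
      rw [hy' i b, hy' i (sstar i)]
      nlinarith
    exact ⟨h1, by have := hz i b hb; linarith⟩
  refine ⟨key, y', fun i => rfl, fun i b hb => ?_⟩
  have := (key i b hb).2
  nlinarith
end
end

section
/- Let x* = (s*_i)_i be a pure profile, and suppose a > 0, M > 0 are such that v_{i s*_i}(x) − v_{i s_i}(x) ≥ a on U_M for all s_i ≠ s*_i, i. If the HEDGE algorithm with perfect mixed payoff observations and step-sizes γ_t > 0 is initialized in U_M, then for every player i and all t ≥ 1: z_{i s_i}(t+1) ≤ −M − a Σ_{j=1}^t γ_j for all s_i ≠ s*_i, and consequently the equilibrium-action probability satisfies x_{i s*_i}(t+1) ≥ 1 − (|S_i| − 1) e^{−M} e^{−a Σ_{j=1}^t γ_j}. -/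
open Real Finset Filter Topology

noncomputable section

lemma logit_sstar_ge {α : Type*} [Fintype α] [DecidableEq α] (y : α → ℝ) (s : α) (c : ℝ)
    (h : ∀ b, b ≠ s → y b - y s ≤ -c) :
    logit y s ≥ 1 - ((Fintype.card α : ℝ) - 1) * Real.exp (-c) := by
  have hS : 0 < ∑ b, Real.exp (y b) :=
    Finset.sum_pos (fun b _ => Real.exp_pos _) ⟨s, Finset.mem_univ s⟩
  have hsum : ∑ b, logit y b = 1 := by
    unfold logit; rw [← Finset.sum_div]; field_simp
  have hsplit : logit y s + ∑ b ∈ univ.erase s, logit y b = 1 := by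
    rw [← hsum, Finset.add_sum_erase univ _ (Finset.mem_univ s)]
  have hb : ∀ b ∈ univ.erase s, logit y b ≤ Real.exp (-c) := by
    intro b hbmem
    have hbne : b ≠ s := (Finset.mem_erase.mp hbmem).1
    have h1 : Real.exp (y s) ≤ ∑ b', Real.exp (y b') :=
      Finset.single_le_sum (fun b' _ => (Real.exp_pos _).le) (Finset.mem_univ s)
    have h2 : logit y b ≤ Real.exp (y b) / Real.exp (y s) := by
      unfold logit
      gcongr
    calc logit y b ≤ Real.exp (y b) / Real.exp (y s) := h2
      _ = Real.exp (y b - y s) := by rw [Real.exp_sub]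
      _ ≤ Real.exp (-c) := Real.exp_le_exp.mpr (h b hbne)
  have hcard : (univ.erase s).card = Fintype.card α - 1 := by
    rw [Finset.card_erase_of_mem (Finset.mem_univ s), Finset.card_univ]
  have hsum_le : ∑ b ∈ univ.erase s, logit y b ≤
      ((Fintype.card α : ℝ) - 1) * Real.exp (-c) := by
    calc ∑ b ∈ univ.erase s, logit y b
        ≤ (univ.erase s).card • Real.exp (-c) := Finset.sum_le_card_nsmul _ _ _ hb
      _ = ((univ.erase s).card : ℝ) * Real.exp (-c) := by rw [nsmul_eq_mul]
      _ = ((Fintype.card α : ℝ) - 1) * Real.exp (-c) := by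
          rw [hcard]
          have : 1 ≤ Fintype.card α := Fintype.card_pos_iff.mpr ⟨s⟩
          push_cast [Nat.cast_sub this]
          ring
  linarith

/-- Telescoping the one-step HEDGE bound: if HEDGE with perfect mixed payoff observations
is initialized in `U_M`, then `z_{i s_i}(t+1) ≤ −M − a Σ_{j=1}^t γ_j` for all `s_i ≠ s*_i`,
and hence `x_{i s*_i}(t+1) ≥ 1 − (|S_i| − 1) e^{−M} e^{−a Σ_{j=1}^t γ_j}`. -/
theorem hedge_score_differences_and_equilibrium_probability
    {N : ℕ} (S : Fin N → Type*) [∀ i, Fintype (S i)] [∀ i, DecidableEq (S i)]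
    (u : ∀ _ : Fin N, (∀ j, S j) → ℝ)
    (sstar : ∀ i, S i)
    (a M : ℝ) (ha : 0 < a) (hM : 0 < M)
    (hgap : ∀ x : ∀ i, S i → ℝ, inUM S sstar M x →
      ∀ i, ∀ b : S i, b ≠ sstar i →
        purePay S u i (sstar i) x - purePay S u i b x ≥ a)
    (γ : ℕ → ℝ) (hγ : ∀ t, 1 ≤ t → 0 < γ t)
    (y : ℕ → ∀ i, S i → ℝ) (x : ℕ → ∀ i, S i → ℝ)
    (hx : ∀ t, 1 ≤ t → ∀ i, x t i = logit (y t i))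
    (hrec : ∀ t, 1 ≤ t → ∀ i, ∀ b : S i,
      y (t + 1) i b = y t i b + γ t * purePay S u i b (x t))
    (hinit : ∀ i, ∀ b : S i, b ≠ sstar i → y 1 i b - y 1 i (sstar i) ≤ -M) :
    ∀ t, 1 ≤ t → ∀ i,
      (∀ b : S i, b ≠ sstar i →
        y (t + 1) i b - y (t + 1) i (sstar i) ≤ -M - a * ∑ j ∈ Finset.Icc 1 t, γ j) ∧
      x (t + 1) i (sstar i) ≥
        1 - ((Fintype.card (S i) : ℝ) - 1) * Real.exp (-M) *
          Real.exp (-a * ∑ j ∈ Finset.Icc 1 t, γ j) := by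
  have key : ∀ t, 1 ≤ t → ∀ i, ∀ b : S i, b ≠ sstar i →
      y (t + 1) i b - y (t + 1) i (sstar i) ≤ -M - a * ∑ j ∈ Finset.Icc 1 t, γ j := by
    intro t ht
    induction t, ht using Nat.le_induction with
    | base =>
      intro i b hb
      have hUM : inUM S sstar M (x 1) := ⟨y 1, fun i => hx 1 le_rfl i, hinit⟩
      have hg := hgap (x 1) hUM i b hb
      have hγ1 := hγ 1 le_rfl
      rw [hrec 1 le_rfl i b, hrec 1 le_rfl i (sstar i), Finset.Icc_self,
        Finset.sum_singleton]
      nlinarith [hinit i b hb]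
    | succ t ht ih =>
      intro i b hb
      have hsum_nonneg : 0 ≤ ∑ j ∈ Finset.Icc 1 t, γ j :=
        Finset.sum_nonneg fun j hj => (hγ j (Finset.mem_Icc.mp hj).1).le
      have hUM : inUM S sstar M (x (t + 1)) := by
        refine ⟨y (t + 1), fun i => hx (t + 1) (by omega) i, ?_⟩
        intro i b hb
        have := ih i b hb
        nlinarith
      have hg := hgap (x (t + 1)) hUM i b hb
      have hγ' := hγ (t + 1) (by omega)
      rw [hrec (t + 1) (by omega) i b, hrec (t + 1) (by omega) i (sstar i),
        Finset.sum_Icc_succ_top (by omega : 1 ≤ t + 1)]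
      have := ih i b hb
      nlinarith
  intro t ht i
  refine ⟨key t ht i, ?_⟩
  rw [hx (t + 1) (by omega) i]
  have h := logit_sstar_ge (y (t + 1) i) (sstar i)
      (M + a * ∑ j ∈ Finset.Icc 1 t, γ j) ?_
  · have hexp : Real.exp (-(M + a * ∑ j ∈ Finset.Icc 1 t, γ j)) =
        Real.exp (-M) * Real.exp (-a * ∑ j ∈ Finset.Icc 1 t, γ j) := by
      rw [← Real.exp_add]; ring_nf
    rw [hexp] at h
    calc logit (y (t + 1) i) (sstar i)
        ≥ 1 - ((Fintype.card (S i) : ℝ) - 1) *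
            (Real.exp (-M) * Real.exp (-a * ∑ j ∈ Finset.Icc 1 t, γ j)) := h
      _ = 1 - ((Fintype.card (S i) : ℝ) - 1) * Real.exp (-M) *
            Real.exp (-a * ∑ j ∈ Finset.Icc 1 t, γ j) := by ring
  · intro b hb
    have := key t ht i b hb
    linarith
end
end

section
/- Let S = {1,…,n}, Δ the simplex on S, Λ the logit map, and D_KL the Kullback–Leibler divergence. Then for every x* ∈ Δ and all y, y' ∈ ℝ^n, writing x = Λ(y) and x' = Λ(y'), we have D_KL(x*, x') ≤ D_KL(x*, x) + ⟨y' − y, x − x*⟩ + (1/2)‖y' − y‖_∞², where ⟨·,·⟩ is the standard inner product on ℝ^n and ‖·‖_∞ the sup-norm. -/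
open Real Finset Filter Topology

noncomputable section

/-- The Kullback–Leibler divergence on the simplex (with `0 · log 0 = 0`). -/
def klDiv {α : Type*} [Fintype α] (xstar x : α → ℝ) : ℝ :=
  ∑ s, xstar s * Real.log (xstar s / x s)

theorem logsumexp_le {α : Type*} [Fintype α] [Nonempty α]
    (w δ : α → ℝ) (hw : ∀ s, 0 < w s) (hw1 : ∑ s, w s = 1)
    (b : ℝ) (hb : ∀ s, |δ s| ≤ b) :
    Real.log (∑ s, w s * Real.exp (δ s)) ≤ (∑ s, w s * δ s) + b ^ 2 / 2 := by
  set μ : ℝ := ∑ s, w s * δ s with hμ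
  set N : ℝ → ℝ := fun t => ∑ s, w s * Real.exp (δ s * t) with hNdef
  set N1 : ℝ → ℝ := fun t => ∑ s, w s * (δ s * Real.exp (δ s * t)) with hN1def
  set N2 : ℝ → ℝ := fun t => ∑ s, w s * (δ s ^ 2 * Real.exp (δ s * t)) with hN2def
  have hNpos : ∀ t, 0 < N t := fun t =>
    Finset.sum_pos (fun s _ => mul_pos (hw s) (Real.exp_pos _)) univ_nonempty
  have hN : ∀ t, HasDerivAt N (N1 t) t := by
    intro t
    apply HasDerivAt.fun_sum
    intro s _
    have h1 : HasDerivAt (fun t : ℝ => δ s * t) (δ s) t := by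
      simpa using (hasDerivAt_id t).const_mul (δ s)
    have h2 : HasDerivAt (fun t : ℝ => Real.exp (δ s * t)) (Real.exp (δ s * t) * δ s) t :=
      h1.exp
    simpa [mul_comm, mul_assoc, mul_left_comm] using h2.const_mul (w s)
  have hN1 : ∀ t, HasDerivAt N1 (N2 t) t := by
    intro t
    apply HasDerivAt.fun_sum
    intro s _
    have h1 : HasDerivAt (fun t : ℝ => δ s * t) (δ s) t := by
      simpa using (hasDerivAt_id t).const_mul (δ s)
    have h2 : HasDerivAt (fun t : ℝ => Real.exp (δ s * t)) (Real.exp (δ s * t) * δ s) t :=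
      h1.exp
    have h3 := (h2.const_mul (δ s)).const_mul (w s)
    rw [show w s * (δ s ^ 2 * Real.exp (δ s * t)) = w s * (δ s * (Real.exp (δ s * t) * δ s)) by ring]
    exact h3
  set φ : ℝ → ℝ := fun t => Real.log (N t) with hφdef
  set φ1 : ℝ → ℝ := fun t => N1 t / N t with hφ1def
  have hφ : ∀ t, HasDerivAt φ (φ1 t) t := by
    intro t
    simpa [hφ1def, div_eq_mul_inv, mul_comm] using (hN t).log (hNpos t).ne'
  have hφ1 : ∀ t, HasDerivAt φ1 ((N2 t * N t - N1 t * N1 t) / (N t) ^ 2) t := by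
    intro t
    exact (hN1 t).div (hN t) (hNpos t).ne'
  -- second derivative bound
  have hsec : ∀ t, (N2 t * N t - N1 t * N1 t) / (N t) ^ 2 ≤ b ^ 2 := by
    intro t
    have hN2le : N2 t ≤ b ^ 2 * N t := by
      rw [hN2def, hNdef, Finset.mul_sum]
      apply Finset.sum_le_sum
      intro s _
      have hsq : δ s ^ 2 ≤ b ^ 2 := by nlinarith [sq_abs (δ s), hb s, abs_nonneg (δ s)]
      have h4 := mul_le_mul_of_nonneg_left
        (mul_le_mul_of_nonneg_right hsq (Real.exp_pos (δ s * t)).le) (hw s).le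
      linarith [h4]
    have h1 : N2 t * N t - N1 t * N1 t ≤ b ^ 2 * (N t) ^ 2 := by
      nlinarith [hNpos t, mul_self_nonneg (N1 t)]
    rw [div_le_iff₀ (pow_pos (hNpos t) 2)]
    linarith
  -- h := μ t + b² t²/2 − φ t
  set g : ℝ → ℝ := fun t => μ * t + b ^ 2 * t ^ 2 / 2 - φ t with hgdef
  set g1 : ℝ → ℝ := fun t => μ + b ^ 2 * t - φ1 t with hg1def
  have hg : ∀ t, HasDerivAt g (g1 t) t := by
    intro t
    have h1 : HasDerivAt (fun t : ℝ => μ * t) μ t := by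
      simpa using (hasDerivAt_id t).const_mul μ
    have h2 : HasDerivAt (fun t : ℝ => b ^ 2 * t ^ 2 / 2) (b ^ 2 * t) t := by
      have := ((hasDerivAt_pow 2 t).const_mul (b ^ 2)).div_const 2
      rw [show b ^ 2 * t = b ^ 2 * (((2:ℕ):ℝ) * t ^ (2 - 1)) / 2 by push_cast; ring]
      exact this
    exact ((h1.add h2).sub (hφ t))
  have hg1 : ∀ t, HasDerivAt g1 (b ^ 2 - (N2 t * N t - N1 t * N1 t) / (N t) ^ 2) t := by
    intro t
    have h2 : HasDerivAt (fun t : ℝ => μ + b ^ 2 * t) (b ^ 2) t := by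
      simpa using ((hasDerivAt_id t).const_mul (b ^ 2)).const_add μ
    exact h2.sub (hφ1 t)
  have hg1mono : Monotone g1 := by
    apply monotone_of_deriv_nonneg
    · intro t; exact (hg1 t).differentiableAt
    · intro t
      rw [(hg1 t).deriv]
      linarith [hsec t]
  have hN0 : N 0 = 1 := by simp [hNdef, hw1]
  have hN10 : N1 0 = μ := by simp [hN1def, hμ]
  have hg10 : g1 0 = 0 := by
    simp [hg1def, hφ1def, hN0, hN10]
  have hg1nonneg : ∀ t, 0 ≤ t → 0 ≤ g1 t := by
    intro t ht
    calc (0:ℝ) = g1 0 := hg10.symm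
    _ ≤ g1 t := hg1mono ht
  have hgmono : MonotoneOn g (Set.Icc 0 1) := by
    apply monotoneOn_of_deriv_nonneg (convex_Icc 0 1)
    · exact fun t _ => ((hg t).differentiableAt).continuousAt.continuousWithinAt
    · intro t ht
      exact ((hg t).differentiableAt).differentiableWithinAt
    · intro t ht
      rw [(hg t).deriv]
      rw [interior_Icc, Set.mem_Ioo] at ht
      exact hg1nonneg t ht.1.le
  have hg0 : g 0 = 0 := by simp [hgdef, hφdef, hN0]
  have hfin : g 0 ≤ g 1 := hgmono (by norm_num) (by norm_num) (by norm_num)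
  rw [hg0] at hfin
  have : φ 1 ≤ μ + b ^ 2 / 2 := by
    simp only [hgdef] at hfin
    nlinarith
  have hN1eq : N 1 = ∑ s, w s * Real.exp (δ s) := by simp [hNdef]
  simpa [hφdef, hNdef] using this

/-- For all `x* ∈ Δ` and `y, y' ∈ ℝ^n`, writing `x = Λ(y)`, `x' = Λ(y')`:
`D_KL(x*, x') ≤ D_KL(x*, x) + ⟨y' − y, x − x*⟩ + ½ ‖y' − y‖_∞²`.
(Here `‖·‖` on `α → ℝ` is the sup-norm, via the `Pi` norm instance.) -/
theorem klDiv_logit_one_step_bound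
    {α : Type*} [Fintype α] [Nonempty α]
    (xstar : α → ℝ) (hpos : ∀ s, 0 ≤ xstar s) (hsum : ∑ s, xstar s = 1)
    (y y' : α → ℝ) :
    klDiv xstar (logit y') ≤
      klDiv xstar (logit y) + (∑ s, (y' s - y s) * (logit y s - xstar s)) +
        (1 / 2) * ‖y' - y‖ ^ 2 := by
  set Z : ℝ := ∑ s, Real.exp (y s) with hZdef
  set Z' : ℝ := ∑ s, Real.exp (y' s) with hZ'def
  have hZ : 0 < Z := Finset.sum_pos (fun s _ => Real.exp_pos _) univ_nonempty
  have hZ' : 0 < Z' := Finset.sum_pos (fun s _ => Real.exp_pos _) univ_nonempty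
  have hlx : ∀ s, 0 < logit y s := fun s => div_pos (Real.exp_pos _) hZ
  have hlx' : ∀ s, 0 < logit y' s := fun s => div_pos (Real.exp_pos _) hZ'
  have hloglogit : ∀ s, Real.log (logit y s) = y s - Real.log Z := by
    intro s
    rw [logit, Real.log_div (Real.exp_ne_zero _) hZ.ne', Real.log_exp]
  have hloglogit' : ∀ s, Real.log (logit y' s) = y' s - Real.log Z' := by
    intro s
    rw [logit, Real.log_div (Real.exp_ne_zero _) hZ'.ne', Real.log_exp]
  -- per-term identity for KL difference
  have hterm : ∀ s, xstar s * Real.log (xstar s / logit y' s)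
      = xstar s * Real.log (xstar s / logit y s)
        + xstar s * ((y s - y' s) + (Real.log Z' - Real.log Z)) := by
    intro s
    rcases eq_or_lt_of_le (hpos s) with h0 | h0
    · simp [← h0]
    · rw [Real.log_div h0.ne' (hlx' s).ne', Real.log_div h0.ne' (hlx s).ne',
        hloglogit, hloglogit']
      ring
  have hkl : klDiv xstar (logit y')
      = klDiv xstar (logit y) + (∑ s, xstar s * (y s - y' s))
        + (Real.log Z' - Real.log Z) := by
    rw [klDiv, klDiv]
    calc ∑ s, xstar s * Real.log (xstar s / logit y' s)
        = ∑ s, (xstar s * Real.log (xstar s / logit y s)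
            + (xstar s * (y s - y' s) + xstar s * (Real.log Z' - Real.log Z))) := by
          apply Finset.sum_congr rfl
          intro s _
          rw [hterm s]; ring
      _ = ∑ s, xstar s * Real.log (xstar s / logit y s)
            + ((∑ s, xstar s * (y s - y' s)) + (∑ s, xstar s) * (Real.log Z' - Real.log Z)) := by
          rw [Finset.sum_add_distrib, Finset.sum_add_distrib, ← Finset.sum_mul]
      _ = _ := by rw [hsum]; ring
  -- logit y is a positive probability vector
  have hwpos : ∀ s, 0 < logit y s := hlx
  have hwsum : ∑ s, logit y s = 1 := by
    simp only [logit]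
    rw [← Finset.sum_div, ← hZdef, div_self hZ.ne']
  -- Z'/Z as an expectation of exp under logit y
  have hZZ : ∑ s, logit y s * Real.exp (y' s - y s) = Z' / Z := by
    rw [hZ'def, Finset.sum_div]
    apply Finset.sum_congr rfl
    intro s _
    rw [logit, div_mul_eq_mul_div, ← Real.exp_add, ← hZdef]
    congr 2
    ring
  have hlogZZ : Real.log Z' - Real.log Z
      = Real.log (∑ s, logit y s * Real.exp (y' s - y s)) := by
    rw [hZZ, Real.log_div hZ'.ne' hZ.ne']
  -- apply the log-sum-exp bound
  have hb : ∀ s, |y' s - y s| ≤ ‖y' - y‖ := by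
    intro s
    have := norm_le_pi_norm (y' - y) s
    simpa [Real.norm_eq_abs] using this
  have hmain := logsumexp_le (logit y) (fun s => y' s - y s) hwpos hwsum
    (‖y' - y‖) hb
  rw [hkl, hlogZZ]
  have hsplit : (∑ s, xstar s * (y s - y' s)) + (∑ s, logit y s * (y' s - y s))
      = ∑ s, (y' s - y s) * (logit y s - xstar s) := by
    rw [← Finset.sum_add_distrib]
    apply Finset.sum_congr rfl
    intro s _
    ring
  nlinarith [hmain, hsplit]
end
end
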